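/- Let (K^{(m)})_{m≥0} be an inhomogeneous Markov chain on ℕ with K^{(0)} finite and transitions p(K^{(m+1)} = k | K^{(m)}) = Poisson(k; α^{(m)} Σ_{k'=1}^{K^{(m)}} β^{(m)}/(k'+β^{(m)}−1)). If there exist finite ᾱ, β̄ such that α^{(m)} < ᾱ and β^{(m)} < β̄ for all m, then lim_{m→∞} P(K^{(m)} = 0) = 1. -/

import Mathlib

open Finset MeasureTheory Filter

/-- The CIBP mean function `λ(K) = α ∑_{k=1}^K β/(k+β-1)`. -/
noncomputable def cibpLam (α β : ℝ) (K : ℕ) : ℝ :=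
  α * ∑ k ∈ Finset.range K, β / ((k : ℝ) + 1 + β - 1)

/-- The Poisson probability mass `Poisson(k; r) = exp(-r) r^k / k!`. -/
noncomputable def poisProb (r : ℝ) (k : ℕ) : ℝ :=
  Real.exp (-r) * r ^ k / (Nat.factorial k)

open scoped ENNReal
set_option linter.unusedSectionVars false
set_option maxHeartbeats 1000000

section PoisLemmas

lemma exp_tsum' (x : ℝ) : ∑' n : ℕ, x ^ n / (n.factorial : ℝ) = Real.exp x := by
  rw [Real.exp_eq_exp_ℝ, NormedSpace.exp_eq_tsum_div]

lemma pois_eq (r : ℝ) (k : ℕ) : poisProb r k = Real.exp (-r) * (r ^ k / (k.factorial : ℝ)) := by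
  rw [poisProb, mul_div_assoc]

lemma pois_nonneg {r : ℝ} (hr : 0 ≤ r) (k : ℕ) : 0 ≤ poisProb r k := by
  rw [pois_eq]; positivity

lemma pois_summable (r : ℝ) : Summable (poisProb r) := by
  have := (Real.summable_pow_div_factorial r).mul_left (Real.exp (-r))
  simpa only [← pois_eq] using this

lemma pois_tsum (r : ℝ) : ∑' k, poisProb r k = 1 := by
  simp only [pois_eq]
  rw [tsum_mul_left, exp_tsum', ← Real.exp_add]
  simp

lemma pois_gf_eq (s r : ℝ) (k : ℕ) : s ^ k * poisProb r k
    = Real.exp (-r) * ((s * r) ^ k / (k.factorial : ℝ)) := by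
  rw [pois_eq, mul_pow]; ring

lemma pois_gf (s r : ℝ) : ∑' k, s ^ k * poisProb r k = Real.exp (-(r * (1 - s))) := by
  simp only [pois_gf_eq]
  rw [tsum_mul_left, exp_tsum', ← Real.exp_add]
  ring_nf

lemma pois_gf_summable (s r : ℝ) : Summable (fun k => s ^ k * poisProb r k) := by
  simp only [pois_gf_eq]
  exact (Real.summable_pow_div_factorial _).mul_left _

lemma pois_mean_eq (r : ℝ) (k : ℕ) : ((k + 1 : ℕ) : ℝ) * poisProb r (k + 1)
    = (Real.exp (-r) * r) * (r ^ k / (k.factorial : ℝ)) := by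
  rw [pois_eq, Nat.factorial_succ, pow_succ]
  push_cast
  field_simp

lemma pois_mean_summable (r : ℝ) : Summable (fun k : ℕ => (k : ℝ) * poisProb r k) := by
  rw [← summable_nat_add_iff 1]
  simp only [pois_mean_eq]
  exact (Real.summable_pow_div_factorial _).mul_left _

lemma pois_mean (r : ℝ) : ∑' k : ℕ, (k : ℝ) * poisProb r k = r := by
  rw [Summable.tsum_eq_zero_add (pois_mean_summable r)]
  simp only [pois_mean_eq]
  rw [tsum_mul_left, exp_tsum', Nat.cast_zero, zero_mul, zero_add, mul_assoc,
    mul_comm r (Real.exp r), ← mul_assoc, ← Real.exp_add, neg_add_cancel, Real.exp_zero, one_mul]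

lemma epois_tsum {r : ℝ} (hr : 0 ≤ r) :
    ∑' k, ENNReal.ofReal (poisProb r k) = 1 := by
  rw [← ENNReal.ofReal_tsum_of_nonneg (pois_nonneg hr) (pois_summable r), pois_tsum,
    ENNReal.ofReal_one]

lemma epois_mean {r : ℝ} (hr : 0 ≤ r) :
    ∑' k : ℕ, (k : ℝ≥0∞) * ENNReal.ofReal (poisProb r k) = ENNReal.ofReal r := by
  have h : ∀ k : ℕ, (k : ℝ≥0∞) * ENNReal.ofReal (poisProb r k)
      = ENNReal.ofReal ((k : ℝ) * poisProb r k) := by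
    intro k
    rw [ENNReal.ofReal_mul (Nat.cast_nonneg k), ENNReal.ofReal_natCast]
  simp only [h]
  rw [← ENNReal.ofReal_tsum_of_nonneg
    (fun k => mul_nonneg (Nat.cast_nonneg k) (pois_nonneg hr k)) (pois_mean_summable r),
    pois_mean]

lemma epois_gf {s r : ℝ} (hs : 0 ≤ s) (hr : 0 ≤ r) :
    ∑' k, ENNReal.ofReal (s ^ k) * ENNReal.ofReal (poisProb r k)
      = ENNReal.ofReal (Real.exp (-(r * (1 - s)))) := by
  have h : ∀ k : ℕ, ENNReal.ofReal (s ^ k) * ENNReal.ofReal (poisProb r k)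
      = ENNReal.ofReal (s ^ k * poisProb r k) := by
    intro k
    rw [ENNReal.ofReal_mul (pow_nonneg hs k)]
  simp only [h]
  rw [← ENNReal.ofReal_tsum_of_nonneg
    (fun k => mul_nonneg (pow_nonneg hs k) (pois_nonneg hr k)) (pois_gf_summable s r),
    pois_gf]

end PoisLemmas

section LamBounds

lemma harmonic_le_sqrt (n : ℕ) :
    ∑ k ∈ Finset.range n, (1 : ℝ) / ((k : ℝ) + 1) ≤ 2 * Real.sqrt n := by
  have key : ∀ k : ℕ, (1 : ℝ) / ((k : ℝ) + 1) ≤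
      2 * Real.sqrt ((k : ℝ) + 1) - 2 * Real.sqrt (k : ℝ) := by
    intro k
    have hk0 : (0 : ℝ) ≤ (k : ℝ) := Nat.cast_nonneg k
    have h1 : Real.sqrt ((k : ℝ) + 1) ^ 2 = (k : ℝ) + 1 := Real.sq_sqrt (by linarith)
    have h2 : Real.sqrt (k : ℝ) ^ 2 = (k : ℝ) := Real.sq_sqrt hk0
    have h3 : Real.sqrt (k : ℝ) ≤ Real.sqrt ((k : ℝ) + 1) := Real.sqrt_le_sqrt (by linarith)
    have h4 : (0 : ℝ) ≤ Real.sqrt (k : ℝ) := Real.sqrt_nonneg _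
    have h5 : Real.sqrt ((k : ℝ) + 1) ≤ (k : ℝ) + 1 := by
      nlinarith [Real.sqrt_nonneg ((k : ℝ) + 1)]
    rw [div_le_iff₀ (by linarith)]
    nlinarith
  calc ∑ k ∈ Finset.range n, (1 : ℝ) / ((k : ℝ) + 1)
      ≤ ∑ k ∈ Finset.range n, (2 * Real.sqrt ((k : ℝ) + 1) - 2 * Real.sqrt (k : ℝ)) :=
        Finset.sum_le_sum fun k _ => key k
    _ = 2 * Real.sqrt n - 2 * Real.sqrt 0 := by
        have := Finset.sum_range_sub (f := fun k : ℕ => 2 * Real.sqrt (k : ℝ)) n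
        simp only [Nat.cast_add, Nat.cast_one] at this
        rw [this, Nat.cast_zero]
    _ ≤ 2 * Real.sqrt n := by simp [Real.sqrt_nonneg]

variable {α β : ℝ} (hα : 0 < α) (hβ : 0 < β)

include hβ in
lemma cibpLam_nonneg (hα' : 0 ≤ α) (n : ℕ) : 0 ≤ cibpLam α β n := by
  apply mul_nonneg hα'
  apply Finset.sum_nonneg
  intro k _
  have h : (0:ℝ) < (k : ℝ) + 1 + β - 1 := by
    have : (0:ℝ) ≤ (k:ℝ) := Nat.cast_nonneg k
    linarith
  positivity

include hα hβ in
lemma cibpLam_le_lin {a : ℝ} (ha : α ≤ a) (n : ℕ) : cibpLam α β n ≤ a * n := by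
  have hsum : ∑ k ∈ Finset.range n, β / ((k : ℝ) + 1 + β - 1) ≤ n := by
    calc ∑ k ∈ Finset.range n, β / ((k : ℝ) + 1 + β - 1)
        ≤ ∑ k ∈ Finset.range n, (1:ℝ) := by
          apply Finset.sum_le_sum
          intro k _
          have hk : (0:ℝ) ≤ (k:ℝ) := Nat.cast_nonneg k
          rw [div_le_one (by linarith)]
          linarith
      _ = n := by simp
  rw [cibpLam]
  calc α * ∑ k ∈ Finset.range n, β / ((k : ℝ) + 1 + β - 1) ≤ α * n :=
        mul_le_mul_of_nonneg_left hsum hα.le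
    _ ≤ a * n := mul_le_mul_of_nonneg_right ha (Nat.cast_nonneg n)

include hα hβ in
lemma cibpLam_le_sqrt {a b : ℝ} (ha : α ≤ a) (hb : β ≤ b) (hb1 : 1 ≤ b) (n : ℕ) :
    cibpLam α β n ≤ 2 * a * b * Real.sqrt n := by
  have hsum : ∑ k ∈ Finset.range n, β / ((k : ℝ) + 1 + β - 1) ≤
      b * ∑ k ∈ Finset.range n, (1:ℝ) / ((k : ℝ) + 1) := by
    rw [Finset.mul_sum]
    apply Finset.sum_le_sum
    intro k _
    have hk : (0:ℝ) ≤ (k:ℝ) := Nat.cast_nonneg k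
    have hterm : (k : ℝ) + 1 + β - 1 = (k : ℝ) + β := by ring
    rw [hterm, div_le_iff₀ (by linarith)]
    have h : b * (1 / ((k:ℝ) + 1)) = b / ((k:ℝ)+1) := by ring
    rw [h, div_mul_eq_mul_div, le_div_iff₀ (by linarith)]
    nlinarith
  have h2 := harmonic_le_sqrt n
  have hb0 : (0:ℝ) < b := lt_of_lt_of_le one_pos hb1
  have ha0 : (0:ℝ) < a := lt_of_lt_of_le hα ha
  rw [cibpLam]
  calc α * ∑ k ∈ Finset.range n, β / ((k : ℝ) + 1 + β - 1)
      ≤ a * (b * (2 * Real.sqrt n)) := by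
        apply mul_le_mul ha ?_ ?_ ha0.le
        · exact hsum.trans (by nlinarith)
        · apply Finset.sum_nonneg
          intro k _
          have hk : (0:ℝ) ≤ (k:ℝ) := Nat.cast_nonneg k
          have h : (0:ℝ) < (k : ℝ) + 1 + β - 1 := by linarith
          positivity
    _ = 2 * a * b * Real.sqrt n := by ring

lemma sqrt_quarter {C : ℝ} (hC : 0 ≤ C) (n : ℕ) :
    C * Real.sqrt n ≤ C ^ 2 + (n : ℝ) / 4 := by
  have h1 : Real.sqrt (n:ℝ) ^ 2 = (n:ℝ) := Real.sq_sqrt (Nat.cast_nonneg n)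
  nlinarith [sq_nonneg (C - Real.sqrt (n:ℝ) / 2), Real.sqrt_nonneg (n:ℝ)]

end LamBounds

section Partition

def extv (m : ℕ) (v : Fin (m + 1) → ℕ) : ℕ → ℕ := fun i => if h : i < m + 1 then v ⟨i, h⟩ else 0

lemma extv_le {m : ℕ} (v : Fin (m + 1) → ℕ) {i : ℕ} (hi : i ≤ m) :
    extv m v i = v ⟨i, Nat.lt_succ_of_le hi⟩ := by
  rw [extv, dif_pos (Nat.lt_succ_of_le hi)]

lemma marginal_step {Ω : Type*} [MeasurableSpace Ω] (μ : Measure Ω)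
    (K : ℕ → Ω → ℕ) (hmeas : ∀ m, Measurable (K m)) (α β : ℕ → ℝ)
    (hMarkov : ∀ (m : ℕ) (k : ℕ) (hist : ℕ → ℕ),
      μ {ω | K (m + 1) ω = k ∧ ∀ i ≤ m, K i ω = hist i} =
        ENNReal.ofReal (poisProb (cibpLam (α m) (β m) (hist m)) k) *
          μ {ω | ∀ i ≤ m, K i ω = hist i})
    (m n k : ℕ) (Q : ℕ → Prop) :
    μ {ω | K (m + 1) ω = k ∧ K m ω = n ∧ Q (K 0 ω)} =
      ENNReal.ofReal (poisProb (cibpLam (α m) (β m) n) k) *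
        μ {ω | K m ω = n ∧ Q (K 0 ω)} := by
  classical
  set S : Set (Fin (m + 1) → ℕ) :=
    {v | v ⟨m, m.lt_succ_self⟩ = n ∧ Q (v ⟨0, Nat.succ_pos m⟩)} with hS
  set D : (Fin (m + 1) → ℕ) → Set Ω := fun v => {ω | ∀ i ≤ m, K i ω = extv m v i} with hD
  have hDmeas : ∀ v, MeasurableSet (D v) := by
    intro v
    have h : D v = ⋂ i, ⋂ (_ : i ≤ m), K i ⁻¹' {extv m v i} := by
      ext ω; simp [hD, Set.mem_iInter]
    rw [h]
    exact MeasurableSet.iInter fun i => MeasurableSet.iInter fun _ =>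
      hmeas i (measurableSet_singleton _)
  have hDdisj : ∀ v w : Fin (m + 1) → ℕ, v ≠ w → Disjoint (D v) (D w) := by
    intro v w hvw
    rw [Set.disjoint_left]
    rintro ω hv hw
    apply hvw
    funext i
    have h1 := hv i.1 (Nat.lt_succ_iff.mp i.2)
    have h2 := hw i.1 (Nat.lt_succ_iff.mp i.2)
    rw [extv_le _ (Nat.lt_succ_iff.mp i.2)] at h1
    rw [extv_le _ (Nat.lt_succ_iff.mp i.2)] at h2
    rw [← h1, ← h2]
  have hUnion : {ω | K m ω = n ∧ Q (K 0 ω)} = ⋃ v : S, D v.1 := by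
    ext ω
    constructor
    · rintro ⟨h1, h2⟩
      refine Set.mem_iUnion.mpr ⟨⟨fun i => K i.1 ω, h1, h2⟩, ?_⟩
      intro i hi; rw [extv_le _ hi]
    · rintro hω
      obtain ⟨⟨v, hv1, hv2⟩, hωv⟩ := Set.mem_iUnion.mp hω
      have hm' := hωv m le_rfl
      have h0 := hωv 0 (Nat.zero_le m)
      rw [extv_le _ le_rfl] at hm'
      rw [extv_le _ (Nat.zero_le m)] at h0
      exact ⟨by rw [hm']; exact hv1, by rw [h0]; exact hv2⟩
  have hUnion2 : {ω | K (m + 1) ω = k ∧ K m ω = n ∧ Q (K 0 ω)} =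
      ⋃ v : S, ({ω | K (m + 1) ω = k} ∩ D v.1) := by
    rw [← Set.inter_iUnion, ← hUnion]
    ext ω; constructor
    · rintro ⟨h1, h2⟩; exact ⟨h1, h2⟩
    · rintro ⟨h1, h2⟩; exact ⟨h1, h2⟩
  have e1 : μ {ω | K m ω = n ∧ Q (K 0 ω)} = ∑' v : S, μ (D v.1) := by
    rw [hUnion]
    exact measure_iUnion
      (fun v w hvw => hDdisj v.1 w.1 (fun h => hvw (Subtype.ext h)))
      (fun v => hDmeas v.1)
  have e2 : μ {ω | K (m + 1) ω = k ∧ K m ω = n ∧ Q (K 0 ω)} =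
      ∑' v : S, μ ({ω | K (m + 1) ω = k} ∩ D v.1) := by
    rw [hUnion2]
    exact measure_iUnion
      (fun v w hvw => ((hDdisj v.1 w.1 (fun h => hvw (Subtype.ext h))).mono
        Set.inter_subset_right Set.inter_subset_right))
      (fun v => ((hmeas (m + 1)) (measurableSet_singleton k)).inter (hDmeas v.1))
  rw [e1, e2]
  have hterm : ∀ v : S, μ ({ω | K (m + 1) ω = k} ∩ D v.1) =
      ENNReal.ofReal (poisProb (cibpLam (α m) (β m) n) k) * μ (D v.1) := by
    rintro ⟨v, hv1, hv2⟩
    have h := hMarkov m k (extv m v)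
    have hx : extv m v m = n := by rw [extv_le _ le_rfl]; exact hv1
    rw [hx] at h
    have hset : {ω | K (m + 1) ω = k ∧ ∀ i ≤ m, K i ω = extv m v i} =
        {ω | K (m + 1) ω = k} ∩ D v := by
      ext ω; exact Iff.rfl
    rw [hset] at h
    exact h
  simp only [hterm]
  rw [ENNReal.tsum_mul_left]

end Partition

section Helpers
variable {Ω : Type*} [MeasurableSpace Ω] {μ : Measure Ω}
variable {X X' Y : Ω → ℕ} (Q : ℕ → Prop)

lemma disjA : Pairwise (Function.onFun Disjoint (fun n => {ω : Ω | X ω = n ∧ Q (Y ω)})) := by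
  intro i j hij
  rw [Function.onFun, Set.disjoint_left]
  rintro ω ⟨h1, _⟩ ⟨h2, _⟩
  exact hij (h1 ▸ h2 ▸ rfl)

variable (hX : Measurable X) (hX' : Measurable X') (hY : Measurable Y)

include hX hY in
lemma measA (n : ℕ) : MeasurableSet {ω | X ω = n ∧ Q (Y ω)} := by
  have h : {ω | X ω = n ∧ Q (Y ω)} = (X ⁻¹' {n}) ∩ (Y ⁻¹' {j | Q j}) := rfl
  rw [h]
  exact (hX (measurableSet_singleton n)).inter (hY (by trivial))

include hX hY in
lemma tsum_meas_le [IsProbabilityMeasure μ] :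
    ∑' n, μ {ω | X ω = n ∧ Q (Y ω)} ≤ 1 := by
  rw [← measure_iUnion (disjA Q) (fun n => measA Q hX hY n)]
  exact prob_le_one

include hX hY in
lemma tail_bound (N : ℕ) :
    (N : ℝ≥0∞) * μ {ω | N < X ω ∧ Q (Y ω)} ≤
      ∑' n : ℕ, (n : ℝ≥0∞) * μ {ω | X ω = n ∧ Q (Y ω)} := by
  have hU : {ω | N < X ω ∧ Q (Y ω)} = ⋃ p : {n : ℕ // N < n}, {ω | X ω = p.1 ∧ Q (Y ω)} := by
    ext ω
    constructor
    · rintro ⟨h1, h2⟩; exact Set.mem_iUnion.mpr ⟨⟨X ω, h1⟩, rfl, h2⟩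
    · rintro hω
      obtain ⟨⟨p, hp⟩, h1, h2⟩ := Set.mem_iUnion.mp hω
      exact ⟨h1 ▸ hp, h2⟩
  have hdisj : Pairwise (Function.onFun Disjoint
      (fun p : {n : ℕ // N < n} => {ω : Ω | X ω = p.1 ∧ Q (Y ω)})) :=
    fun p q hpq => disjA (X := X) (Y := Y) Q (fun h => hpq (Subtype.ext h))
  rw [hU, measure_iUnion hdisj (fun p => measA Q hX hY p.1)]
  rw [← ENNReal.tsum_mul_left]
  calc ∑' p : {n : ℕ // N < n}, (N : ℝ≥0∞) * μ {ω | X ω = p.1 ∧ Q (Y ω)}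
      ≤ ∑' p : {n : ℕ // N < n}, (p.1 : ℝ≥0∞) * μ {ω | X ω = p.1 ∧ Q (Y ω)} := by
        apply ENNReal.tsum_le_tsum
        intro p
        exact mul_le_mul_left (by exact_mod_cast p.2.le) _
    _ ≤ ∑' n : ℕ, (n : ℝ≥0∞) * μ {ω | X ω = n ∧ Q (Y ω)} :=
        ENNReal.tsum_comp_le_tsum_of_injective Subtype.val_injective _

include hX hY in
lemma mid_bound (N : ℕ) :
    μ {ω | 1 ≤ X ω ∧ X ω ≤ N ∧ Q (Y ω)} ≤
      ∑ n ∈ Finset.Icc 1 N, μ {ω | X ω = n ∧ Q (Y ω)} := by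
  have hsub : {ω | 1 ≤ X ω ∧ X ω ≤ N ∧ Q (Y ω)} ⊆
      ⋃ n ∈ Finset.Icc 1 N, {ω : Ω | X ω = n ∧ Q (Y ω)} := by
    rintro ω ⟨h1, h2, h3⟩
    exact Set.mem_biUnion (Finset.mem_Icc.mpr ⟨h1, h2⟩) ⟨rfl, h3⟩
  exact (measure_mono hsub).trans (measure_biUnion_finset_le _ _)

include hX hX' hY in
lemma split_mid (k : ℕ) :
    μ {ω | X ω = k ∧ Q (Y ω)} = ∑' n, μ {ω | X ω = k ∧ X' ω = n ∧ Q (Y ω)} := by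
  have hU : {ω | X ω = k ∧ Q (Y ω)} = ⋃ n : ℕ, {ω | X ω = k ∧ X' ω = n ∧ Q (Y ω)} := by
    ext ω
    constructor
    · rintro ⟨h1, h2⟩; exact Set.mem_iUnion.mpr ⟨X' ω, h1, rfl, h2⟩
    · rintro hω
      obtain ⟨n, h1, _, h3⟩ := Set.mem_iUnion.mp hω
      exact ⟨h1, h3⟩
  have hdisj : Pairwise (Function.onFun Disjoint
      (fun n : ℕ => {ω : Ω | X ω = k ∧ X' ω = n ∧ Q (Y ω)})) := by
    intro i j hij
    rw [Function.onFun, Set.disjoint_left]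
    rintro ω ⟨_, h1, _⟩ ⟨_, h2, _⟩
    exact hij (h1 ▸ h2 ▸ rfl)
  have hm : ∀ n : ℕ, MeasurableSet {ω | X ω = k ∧ X' ω = n ∧ Q (Y ω)} := by
    intro n
    have h : {ω | X ω = k ∧ X' ω = n ∧ Q (Y ω)} =
        (X ⁻¹' {k}) ∩ ((X' ⁻¹' {n}) ∩ (Y ⁻¹' {j | Q j})) := rfl
    rw [h]
    exact (hX (measurableSet_singleton k)).inter
      ((hX' (measurableSet_singleton n)).inter (hY (by trivial)))
  rw [hU, measure_iUnion hdisj hm]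

end Helpers

/-- General CIBP termination: for an inhomogeneous Markov chain on `ℕ` with
Poisson transitions of means `λ(·; α^(m), β^(m))`, if the depth-varying
parameters are uniformly bounded, then `P(K^(m) = 0) → 1` as `m → ∞`. -/
theorem cibp_terminates_inhomogeneous (α β : ℕ → ℝ) (abar bbar : ℝ)
    (hαpos : ∀ m, 0 < α m) (hβpos : ∀ m, 0 < β m)
    (hα : ∀ m, α m < abar) (hβ : ∀ m, β m < bbar)
    {Ω : Type*} [MeasurableSpace Ω] (μ : Measure Ω) [IsProbabilityMeasure μ]
    (K : ℕ → Ω → ℕ) (hmeas : ∀ m, Measurable (K m))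
    (hMarkov : ∀ (m : ℕ) (k : ℕ) (hist : ℕ → ℕ),
      μ {ω | K (m + 1) ω = k ∧ ∀ i ≤ m, K i ω = hist i} =
        ENNReal.ofReal (poisProb (cibpLam (α m) (β m) (hist m)) k) *
          μ {ω | ∀ i ≤ m, K i ω = hist i}) :
    Tendsto (fun m => μ {ω | K m ω = 0}) atTop (nhds 1) := by
  classical
  have habar : 0 < abar := (hαpos 0).trans (hα 0)
  set a : ℝ := max abar 1 with ha_def
  have ha1 : (1:ℝ) ≤ a := le_max_right _ _
  have ha0 : (0:ℝ) < a := lt_of_lt_of_le one_pos ha1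
  set s : ℝ := Real.exp (-a) with hs_def
  have hs0 : 0 < s := Real.exp_pos _
  have hs1 : s < 1 := by
    rw [hs_def, Real.exp_lt_one_iff]; linarith
  set b : ℝ := max bbar 1 with hb_def
  have hb1 : (1:ℝ) ≤ b := le_max_right _ _
  have hb0 : (0:ℝ) < b := lt_of_lt_of_le one_pos hb1
  set C : ℝ := 2 * abar * b with hC_def
  have hC0 : (0:ℝ) < C := by
    rw [hC_def]; exact mul_pos (mul_pos two_pos habar) hb0
  have hΛ0 : ∀ m n, 0 ≤ cibpLam (α m) (β m) n :=
    fun m n => cibpLam_nonneg (hβpos m) (hαpos m).le n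
  have hΛa : ∀ m n, cibpLam (α m) (β m) n ≤ a * n := by
    intro m n
    exact cibpLam_le_lin (hαpos m) (hβpos m) ((hα m).le.trans (le_max_left _ _)) n
  have hΛq : ∀ m n, cibpLam (α m) (β m) n ≤ C ^ 2 + (n:ℝ) / 4 := by
    intro m n
    refine (cibpLam_le_sqrt (hαpos m) (hβpos m) (hα m).le
      ((hβ m).le.trans (le_max_left _ _)) hb1 n).trans ?_
    rw [hC_def]
    exact sqrt_quarter (by positivity) n
  -- reduce to the complement
  have hcompl : ∀ m, μ {ω | K m ω = 0} = 1 - μ {ω | ¬ K m ω = 0} := by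
    intro m
    have hms : MeasurableSet {ω | ¬ K m ω = 0} :=
      ((hmeas m) (measurableSet_singleton 0)).compl
    have h := prob_compl_eq_one_sub (μ := μ) hms
    have hcc : {ω | ¬ K m ω = 0}ᶜ = {ω | K m ω = 0} := by
      ext ω; simp
    rw [hcc] at h
    exact h
  suffices hA : Tendsto (fun m => μ {ω | ¬ K m ω = 0}) atTop (nhds 0) by
    have h1 : Tendsto (fun m => 1 - μ {ω | ¬ K m ω = 0}) atTop (nhds (1 - 0)) :=
      ENNReal.Tendsto.sub tendsto_const_nhds hA (Or.inl ENNReal.one_ne_top)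
    rw [tsub_zero] at h1
    simp only [hcompl]
    exact h1
  rw [ENNReal.tendsto_atTop_zero]
  intro ε hε
  set ε3 : ℝ≥0∞ := min ε 1 / 3 with hε3_def
  have hε3_0 : ε3 ≠ 0 := by
    have hm : (0 : ℝ≥0∞) < min ε 1 := lt_min hε zero_lt_one
    rw [hε3_def]
    simp [ENNReal.div_eq_zero_iff, hm.ne']
  have hε3_top : ε3 ≠ ∞ := by
    rw [hε3_def]
    exact (ENNReal.div_lt_top ((min_le_right ε 1).trans_lt ENNReal.one_lt_top).ne
      (by norm_num)).ne
  have hε3_sum : ε3 + ε3 + ε3 ≤ ε := by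
    have h3 : ε3 + ε3 + ε3 = 3 * ε3 := by ring
    rw [h3, hε3_def, ENNReal.mul_div_cancel' (by norm_num) (by norm_num)]
    exact min_le_left _ _
  -- choose the initial-state truncation T
  have hTlim : Tendsto (fun T : ℕ => μ {ω | T < K 0 ω}) atTop (nhds 0) := by
    have hme : ∀ T : ℕ, NullMeasurableSet {ω | T < K 0 ω} μ := by
      intro T
      exact ((hmeas 0) measurableSet_Ioi).nullMeasurableSet
    have hanti : Antitone (fun T : ℕ => {ω | T < K 0 ω}) := by
      intro T T' hTT ω hω
      simp only [Set.mem_setOf_eq] at hω ⊢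
      omega
    have hint : ⋂ T : ℕ, {ω | T < K 0 ω} = (∅ : Set Ω) := by
      ext ω
      simp only [Set.mem_iInter, Set.mem_empty_iff_false, iff_false, not_forall]
      exact ⟨K 0 ω, by simp⟩
    have := tendsto_measure_iInter_atTop (μ := μ) hme hanti ⟨0, measure_ne_top μ _⟩
    rw [hint, measure_empty] at this
    exact this
  obtain ⟨T, hT⟩ : ∃ T : ℕ, μ {ω | T < K 0 ω} ≤ ε3 := by
    have := (ENNReal.tendsto_atTop_zero.mp hTlim) ε3 (pos_iff_ne_zero.mpr hε3_0)
    obtain ⟨T, hT⟩ := this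
    exact ⟨T, hT T le_rfl⟩
  -- basic facts about the truncated chain
  have hPrec : ∀ m k, μ {ω | K (m+1) ω = k ∧ K 0 ω ≤ T} =
      ∑' n, ENNReal.ofReal (poisProb (cibpLam (α m) (β m) n) k) *
        μ {ω | K m ω = n ∧ K 0 ω ≤ T} := by
    intro m k
    have h1 : μ {ω | K (m+1) ω = k ∧ K 0 ω ≤ T} =
        ∑' n, μ {ω | K (m+1) ω = k ∧ K m ω = n ∧ K 0 ω ≤ T} :=
      split_mid (fun j => j ≤ T) (hmeas (m+1)) (hmeas m) (hmeas 0) k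
    rw [h1]
    apply tsum_congr
    intro n
    exact marginal_step μ K hmeas α β hMarkov m n k (fun j => j ≤ T)
  have hmass : ∀ m, ∑' n, μ {ω | K m ω = n ∧ K 0 ω ≤ T} ≤ 1 :=
    fun m => tsum_meas_le (fun j => j ≤ T) (hmeas m) (hmeas 0)
  -- the truncated first moment
  set z : ℕ → ℝ≥0∞ :=
    fun m => ∑' n : ℕ, (n : ℝ≥0∞) * μ {ω | K m ω = n ∧ K 0 ω ≤ T} with hz_def
  have hzrec : ∀ m, z (m+1) =
      ∑' n, ENNReal.ofReal (cibpLam (α m) (β m) n) * μ {ω | K m ω = n ∧ K 0 ω ≤ T} := by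
    intro m
    simp only [hz_def]
    calc ∑' k : ℕ, (k:ℝ≥0∞) * μ {ω | K (m+1) ω = k ∧ K 0 ω ≤ T}
        = ∑' k : ℕ, ∑' n : ℕ, (k:ℝ≥0∞) * (ENNReal.ofReal (poisProb (cibpLam (α m) (β m) n) k) *
            μ {ω | K m ω = n ∧ K 0 ω ≤ T}) := by
          apply tsum_congr; intro k
          rw [hPrec m k, ENNReal.tsum_mul_left]
      _ = ∑' n : ℕ, ∑' k : ℕ, (k:ℝ≥0∞) * (ENNReal.ofReal (poisProb (cibpLam (α m) (β m) n) k) *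
            μ {ω | K m ω = n ∧ K 0 ω ≤ T}) := ENNReal.tsum_comm
      _ = ∑' n : ℕ, (∑' k : ℕ, (k:ℝ≥0∞) * ENNReal.ofReal (poisProb (cibpLam (α m) (β m) n) k)) *
            μ {ω | K m ω = n ∧ K 0 ω ≤ T} := by
          apply tsum_congr; intro n
          rw [← ENNReal.tsum_mul_right]
          apply tsum_congr; intro k
          rw [mul_assoc]
      _ = ∑' n, ENNReal.ofReal (cibpLam (α m) (β m) n) * μ {ω | K m ω = n ∧ K 0 ω ≤ T} := by
          apply tsum_congr; intro n
          rw [epois_mean (hΛ0 m n)]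
  set Z : ℝ := max (T:ℝ) (2 * C ^ 2) with hZ_def
  have hZ0 : (0:ℝ) ≤ Z := le_trans (Nat.cast_nonneg T) (le_max_left _ _)
  have hzZ : ∀ m, z m ≤ ENNReal.ofReal Z := by
    intro m
    induction m with
    | zero =>
      simp only [hz_def]
      calc ∑' n : ℕ, (n : ℝ≥0∞) * μ {ω | K 0 ω = n ∧ K 0 ω ≤ T}
          ≤ ∑' n : ℕ, (T : ℝ≥0∞) * μ {ω | K 0 ω = n ∧ K 0 ω ≤ T} := by
            apply ENNReal.tsum_le_tsum
            intro n
            rcases le_or_gt n T with h | h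
            · exact mul_le_mul_left (by exact_mod_cast h) _
            · have hempty : {ω | K 0 ω = n ∧ K 0 ω ≤ T} = (∅ : Set Ω) := by
                ext ω
                simp only [Set.mem_setOf_eq, Set.mem_empty_iff_false, iff_false, not_and]
                intro h1
                omega
              rw [hempty]
              simp
        _ = (T : ℝ≥0∞) * ∑' n, μ {ω | K 0 ω = n ∧ K 0 ω ≤ T} := ENNReal.tsum_mul_left
        _ ≤ (T : ℝ≥0∞) * 1 := mul_le_mul_right (hmass 0) _
        _ = ENNReal.ofReal (T:ℝ) := by rw [mul_one, ENNReal.ofReal_natCast]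
        _ ≤ ENNReal.ofReal Z := ENNReal.ofReal_le_ofReal (le_max_left _ _)
    | succ m ih =>
      rw [hzrec m]
      have hstep : ∑' n, ENNReal.ofReal (cibpLam (α m) (β m) n) *
          μ {ω | K m ω = n ∧ K 0 ω ≤ T} ≤
          ∑' n : ℕ, (ENNReal.ofReal (C ^ 2) + ENNReal.ofReal ((4:ℝ)⁻¹) * (n:ℝ≥0∞)) *
            μ {ω | K m ω = n ∧ K 0 ω ≤ T} := by
        apply ENNReal.tsum_le_tsum
        intro n
        apply mul_le_mul_left
        calc ENNReal.ofReal (cibpLam (α m) (β m) n)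
            ≤ ENNReal.ofReal (C ^ 2 + (n:ℝ) / 4) := ENNReal.ofReal_le_ofReal (hΛq m n)
          _ = ENNReal.ofReal (C ^ 2) + ENNReal.ofReal ((4:ℝ)⁻¹) * (n:ℝ≥0∞) := by
              rw [ENNReal.ofReal_add (by positivity) (by positivity)]
              congr 1
              rw [div_eq_mul_inv, mul_comm, ENNReal.ofReal_mul (by norm_num),
                ENNReal.ofReal_natCast]
      refine le_trans hstep ?_
      have hdistrib : ∑' n : ℕ, (ENNReal.ofReal (C ^ 2) + ENNReal.ofReal ((4:ℝ)⁻¹) * (n:ℝ≥0∞)) *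
            μ {ω | K m ω = n ∧ K 0 ω ≤ T} =
          ENNReal.ofReal (C ^ 2) * (∑' n, μ {ω | K m ω = n ∧ K 0 ω ≤ T}) +
            ENNReal.ofReal ((4:ℝ)⁻¹) * z m := by
        simp only [hz_def]
        rw [← ENNReal.tsum_mul_left (a := ENNReal.ofReal (C ^ 2)),
          ← ENNReal.tsum_mul_left (a := ENNReal.ofReal ((4:ℝ)⁻¹)), ← ENNReal.tsum_add]
        apply tsum_congr
        intro n
        rw [add_mul, mul_assoc]
      rw [hdistrib]
      calc ENNReal.ofReal (C ^ 2) * (∑' n, μ {ω | K m ω = n ∧ K 0 ω ≤ T}) +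
            ENNReal.ofReal ((4:ℝ)⁻¹) * z m
          ≤ ENNReal.ofReal (C ^ 2) * 1 + ENNReal.ofReal ((4:ℝ)⁻¹) * ENNReal.ofReal Z := by
            exact add_le_add (mul_le_mul_right (hmass m) _) (mul_le_mul_right ih _)
        _ = ENNReal.ofReal (C ^ 2 + 4⁻¹ * Z) := by
            rw [mul_one, ← ENNReal.ofReal_mul (by norm_num),
              ← ENNReal.ofReal_add (by positivity) (by positivity)]
        _ ≤ ENNReal.ofReal Z := by
            apply ENNReal.ofReal_le_ofReal
            have h1 : C ^ 2 ≤ Z / 2 := by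
              have := le_max_right (T:ℝ) (2 * C ^ 2)
              rw [← hZ_def] at this
              linarith
            linarith
  -- choose N controlling the tail
  obtain ⟨N, hNgt⟩ : ∃ N : ℕ, ENNReal.ofReal Z / ε3 < N :=
    ENNReal.exists_nat_gt (by
      exact (ENNReal.div_lt_top ENNReal.ofReal_ne_top hε3_0).ne)
  have hN0 : N ≠ 0 := by
    intro h
    rw [h] at hNgt
    simpa using hNgt
  have hNne : (N : ℝ≥0∞) ≠ 0 := by exact_mod_cast hN0
  have hNtop : (N : ℝ≥0∞) ≠ ∞ := ENNReal.natCast_ne_top N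
  have hZN : ENNReal.ofReal Z < (N : ℝ≥0∞) * ε3 :=
    (ENNReal.div_lt_iff (Or.inl hε3_0) (Or.inl hε3_top)).mp hNgt
  have htail : ∀ m, μ {ω | N < K m ω ∧ K 0 ω ≤ T} ≤ ε3 := by
    intro m
    have h1 : (N : ℝ≥0∞) * μ {ω | N < K m ω ∧ K 0 ω ≤ T} ≤ z m := by
      simp only [hz_def]
      exact tail_bound (fun j => j ≤ T) (hmeas m) (hmeas 0) N
    have h2 : (N : ℝ≥0∞) * μ {ω | N < K m ω ∧ K 0 ω ≤ T} ≤ (N : ℝ≥0∞) * ε3 :=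
      le_trans (h1.trans (hzZ m)) hZN.le
    exact (ENNReal.mul_le_mul_iff_right hNne hNtop).mp h2
  -- the generating-function supermartingale
  set δ : ℝ := Real.exp (-(a * N * (1 - s))) * (1 - Real.exp (-(a * s))) with hδ_def
  have hδ0 : 0 < δ := by
    apply mul_pos (Real.exp_pos _)
    have : Real.exp (-(a * s)) < 1 := by
      rw [Real.exp_lt_one_iff]
      nlinarith
    linarith
  set G : ℕ → ℝ≥0∞ :=
    fun m => ∑' n, ENNReal.ofReal (s ^ n) * μ {ω | K m ω = n ∧ K 0 ω ≤ T} with hG_def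
  have hGrec : ∀ m, G (m+1) =
      ∑' n, ENNReal.ofReal (Real.exp (-(cibpLam (α m) (β m) n * (1 - s)))) *
        μ {ω | K m ω = n ∧ K 0 ω ≤ T} := by
    intro m
    simp only [hG_def]
    calc ∑' k : ℕ, ENNReal.ofReal (s ^ k) * μ {ω | K (m+1) ω = k ∧ K 0 ω ≤ T}
        = ∑' k : ℕ, ∑' n : ℕ, ENNReal.ofReal (s ^ k) *
            (ENNReal.ofReal (poisProb (cibpLam (α m) (β m) n) k) *
              μ {ω | K m ω = n ∧ K 0 ω ≤ T}) := by
          apply tsum_congr; intro k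
          rw [hPrec m k, ENNReal.tsum_mul_left]
      _ = ∑' n : ℕ, ∑' k : ℕ, ENNReal.ofReal (s ^ k) *
            (ENNReal.ofReal (poisProb (cibpLam (α m) (β m) n) k) *
              μ {ω | K m ω = n ∧ K 0 ω ≤ T}) := ENNReal.tsum_comm
      _ = ∑' n : ℕ, (∑' k : ℕ, ENNReal.ofReal (s ^ k) *
            ENNReal.ofReal (poisProb (cibpLam (α m) (β m) n) k)) *
              μ {ω | K m ω = n ∧ K 0 ω ≤ T} := by
          apply tsum_congr; intro n
          rw [← ENNReal.tsum_mul_right]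
          apply tsum_congr; intro k
          rw [mul_assoc]
      _ = ∑' n, ENNReal.ofReal (Real.exp (-(cibpLam (α m) (β m) n * (1 - s)))) *
            μ {ω | K m ω = n ∧ K 0 ω ≤ T} := by
          apply tsum_congr; intro n
          rw [epois_gf hs0.le (hΛ0 m n)]
  -- the pointwise gap inequality
  have hgap : ∀ m n, ENNReal.ofReal (s ^ n) +
      (if n ∈ Finset.Icc 1 N then ENNReal.ofReal δ else 0) ≤
      ENNReal.ofReal (Real.exp (-(cibpLam (α m) (β m) n * (1 - s)))) := by
    intro m n
    have hsn : s ^ n = Real.exp (-(a * n)) := by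
      rw [hs_def, ← Real.exp_nat_mul]
      congr 1
      ring
    have h1s : (0:ℝ) ≤ 1 - s := by linarith
    have hmono : Real.exp (-(a * n * (1 - s))) ≤
        Real.exp (-(cibpLam (α m) (β m) n * (1 - s))) := by
      apply Real.exp_le_exp.mpr
      nlinarith [mul_le_mul_of_nonneg_right (hΛa m n) h1s]
    by_cases hn : n ∈ Finset.Icc 1 N
    · obtain ⟨hn1, hn2⟩ := Finset.mem_Icc.mp hn
      rw [if_pos hn, ← ENNReal.ofReal_add (by positivity) hδ0.le]
      apply le_trans _ (ENNReal.ofReal_le_ofReal hmono)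
      apply ENNReal.ofReal_le_ofReal
      -- s ^ n + δ ≤ exp (-(a n (1-s)))
      rw [hsn]
      have hsplit : Real.exp (-(a * n)) =
          Real.exp (-(a * n * (1 - s))) * Real.exp (-(a * n * s)) := by
        rw [← Real.exp_add]
        congr 1
        ring
      have h1n : (1:ℝ) ≤ (n:ℝ) := by exact_mod_cast hn1
      have hδle : δ ≤ Real.exp (-(a * n * (1 - s))) * (1 - Real.exp (-(a * n * s))) := by
        rw [hδ_def]
        have hexp1 : Real.exp (-(a * s)) < 1 := by
          rw [Real.exp_lt_one_iff]
          nlinarith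
        apply mul_le_mul
        · apply Real.exp_le_exp.mpr
          have hnN : (n:ℝ) ≤ (N:ℝ) := by exact_mod_cast hn2
          have h := mul_le_mul_of_nonneg_right
            (mul_le_mul_of_nonneg_left hnN ha0.le) h1s
          linarith
        · have h2 : Real.exp (-(a * n * s)) ≤ Real.exp (-(a * s)) := by
            apply Real.exp_le_exp.mpr
            have h3 := mul_le_mul_of_nonneg_right
              (le_mul_of_one_le_right ha0.le h1n) hs0.le
            linarith
          linarith
        · linarith
        · positivity
      rw [mul_sub, mul_one] at hδle
      rw [hsplit]
      linarith
    · rw [if_neg hn, add_zero]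
      apply le_trans _ (ENNReal.ofReal_le_ofReal hmono)
      apply ENNReal.ofReal_le_ofReal
      rw [hsn]
      apply Real.exp_le_exp.mpr
      have h1s : (0:ℝ) ≤ 1 - s := by linarith
      have han : (0:ℝ) ≤ a * n := by positivity
      nlinarith
  -- telescoping the generating function
  set Q : ℕ → ℝ≥0∞ :=
    fun m => ∑ n ∈ Finset.Icc 1 N, μ {ω | K m ω = n ∧ K 0 ω ≤ T} with hQ_def
  have hGstep : ∀ m, G m + ENNReal.ofReal δ * Q m ≤ G (m+1) := by
    intro m
    rw [hGrec m]
    have hsum_ind : ∑' n, (if n ∈ Finset.Icc 1 N then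
        ENNReal.ofReal δ * μ {ω | K m ω = n ∧ K 0 ω ≤ T} else 0) =
        ENNReal.ofReal δ * Q m := by
      rw [tsum_eq_sum (s := Finset.Icc 1 N) (fun n hn => if_neg hn)]
      simp only [hQ_def]
      rw [Finset.mul_sum]
      exact Finset.sum_congr rfl fun n hn => if_pos hn
    calc G m + ENNReal.ofReal δ * Q m
        = ∑' n, (ENNReal.ofReal (s ^ n) * μ {ω | K m ω = n ∧ K 0 ω ≤ T} +
            (if n ∈ Finset.Icc 1 N then
              ENNReal.ofReal δ * μ {ω | K m ω = n ∧ K 0 ω ≤ T} else 0)) := by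
          simp only [hG_def]
          rw [← hsum_ind, ENNReal.tsum_add]
      _ ≤ ∑' n, ENNReal.ofReal (Real.exp (-(cibpLam (α m) (β m) n * (1 - s)))) *
            μ {ω | K m ω = n ∧ K 0 ω ≤ T} := by
          apply ENNReal.tsum_le_tsum
          intro n
          have hsplit : ENNReal.ofReal (s ^ n) * μ {ω | K m ω = n ∧ K 0 ω ≤ T} +
              (if n ∈ Finset.Icc 1 N then
                ENNReal.ofReal δ * μ {ω | K m ω = n ∧ K 0 ω ≤ T} else 0) =
              (ENNReal.ofReal (s ^ n) +
                (if n ∈ Finset.Icc 1 N then ENNReal.ofReal δ else 0)) *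
                μ {ω | K m ω = n ∧ K 0 ω ≤ T} := by
            by_cases hn : n ∈ Finset.Icc 1 N
            · rw [if_pos hn, if_pos hn, add_mul]
            · rw [if_neg hn, if_neg hn, add_zero, add_zero]
          rw [hsplit]
          exact mul_le_mul_left (hgap m n) _
  have hG1 : ∀ m, G m ≤ 1 := by
    intro m
    simp only [hG_def]
    calc ∑' n, ENNReal.ofReal (s ^ n) * μ {ω | K m ω = n ∧ K 0 ω ≤ T}
        ≤ ∑' n, 1 * μ {ω | K m ω = n ∧ K 0 ω ≤ T} := by
          apply ENNReal.tsum_le_tsum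
          intro n
          exact mul_le_mul_left
            (ENNReal.ofReal_le_one.mpr (pow_le_one₀ hs0.le hs1.le)) _
      _ = ∑' n, μ {ω | K m ω = n ∧ K 0 ω ≤ T} := by simp only [one_mul]
      _ ≤ 1 := hmass m
  have htel : ∀ M, ∑ m ∈ Finset.range M, ENNReal.ofReal δ * Q m ≤ 1 := by
    intro M
    have h : G 0 + ∑ m ∈ Finset.range M, ENNReal.ofReal δ * Q m ≤ G M := by
      induction M with
      | zero => simp
      | succ M ih =>
        rw [Finset.sum_range_succ, ← add_assoc]
        exact le_trans (add_le_add_left ih _) (hGstep M)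
    exact le_trans (le_trans le_add_self h) (hG1 M)
  have hQsumFin : ∑' m, ENNReal.ofReal δ * Q m ≤ 1 :=
    ENNReal.tsum_le_of_sum_range_le htel
  have hQne : ∑' m, Q m ≠ ∞ := by
    intro hcon
    rw [ENNReal.tsum_mul_left, hcon,
      ENNReal.mul_top (by simp [ENNReal.ofReal_eq_zero, not_le, hδ0])] at hQsumFin
    exact (by simp : ¬ (⊤ : ℝ≥0∞) ≤ 1) hQsumFin
  have hQ0 : Tendsto Q atTop (nhds 0) :=
    ENNReal.tendsto_atTop_zero_of_tsum_ne_top hQne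
  obtain ⟨m₀, hm₀⟩ := (ENNReal.tendsto_atTop_zero.mp hQ0) ε3 (pos_iff_ne_zero.mpr hε3_0)
  refine ⟨m₀, fun m hm => ?_⟩
  have hmid : μ {ω | 1 ≤ K m ω ∧ K m ω ≤ N ∧ K 0 ω ≤ T} ≤ Q m :=
    mid_bound (fun j => j ≤ T) (hmeas m) (hmeas 0) N
  have hsub : {ω | ¬ K m ω = 0} ⊆
      ({ω | 1 ≤ K m ω ∧ K m ω ≤ N ∧ K 0 ω ≤ T} ∪ {ω | N < K m ω ∧ K 0 ω ≤ T}) ∪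
        {ω | T < K 0 ω} := by
    intro ω hω
    simp only [Set.mem_setOf_eq, Set.mem_union]
    by_cases hKT : K 0 ω ≤ T
    · left
      by_cases hKN : K m ω ≤ N
      · left; exact ⟨Nat.one_le_iff_ne_zero.mpr hω, hKN, hKT⟩
      · right; exact ⟨not_le.mp hKN, hKT⟩
    · right; exact not_le.mp hKT
  calc μ {ω | ¬ K m ω = 0}
      ≤ μ (({ω | 1 ≤ K m ω ∧ K m ω ≤ N ∧ K 0 ω ≤ T} ∪ {ω | N < K m ω ∧ K 0 ω ≤ T}) ∪
          {ω | T < K 0 ω}) := measure_mono hsub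
    _ ≤ μ ({ω | 1 ≤ K m ω ∧ K m ω ≤ N ∧ K 0 ω ≤ T} ∪ {ω | N < K m ω ∧ K 0 ω ≤ T}) +
          μ {ω | T < K 0 ω} := measure_union_le _ _
    _ ≤ (μ {ω | 1 ≤ K m ω ∧ K m ω ≤ N ∧ K 0 ω ≤ T} + μ {ω | N < K m ω ∧ K 0 ω ≤ T}) +
          μ {ω | T < K 0 ω} := add_le_add_left (measure_union_le _ _) _
    _ ≤ (ε3 + ε3) + ε3 :=
        add_le_add (add_le_add (hmid.trans (hm₀ m hm)) (htail m)) hT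
    _ ≤ ε := hε3_sum
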